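/- Let X be a Banach space, μ a regular Borel probability measure on (B_{X*}, w*), S : X → L¹(μ) the operator S(x)(x*) = x*(x), and R : L¹(μ) → X* the operator determined by ⟨R(f), x⟩ = ∫_{B_{X*}} f·S(x) dμ. If the operator S' : X → L²(μ), S'(x)(x*) = x*(x), has non-separable range, then T := R ∘ S : X → X* has non-separable range. -/

import Mathlib

open MeasureTheory NormedSpace TopologicalSpace

variable (X : Type*) [NormedAddCommGroup X] [NormedSpace ℝ X]

/-- The closed unit ball of the dual of `X`, equipped with the weak* topology
(a compact space, by the Banach–Alaoglu theorem). -/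
def dualBall : Set (WeakDual ℝ X) :=
  WeakDual.toStrongDual ⁻¹' Metric.closedBall (0 : StrongDual ℝ X) 1

instance : CompactSpace (dualBall X) :=
  isCompact_iff_compactSpace.mp (WeakDual.isCompact_closedBall (𝕜 := ℝ) (E := X) 0 1)

noncomputable instance : MeasurableSpace (dualBall X) := borel _

instance : BorelSpace (dualBall X) := ⟨rfl⟩

/-- The canonical embedding `i : X → C(B_{X*})`, `i(x)(x*) = x*(x)`. -/
noncomputable def canonicalEmbeddingCK (x : X) : C(dualBall X, ℝ) :=
  ContinuousMap.mk (fun φ : dualBall X => (φ : WeakDual ℝ X) x)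
    ((WeakDual.eval_continuous x).comp continuous_subtype_val)

/-- Let `X` be a Banach space, `μ` a regular Borel probability measure
on `(B_{X*}, w*)`, `S : X → L¹(μ)` the operator `S(x)(x*) = x*(x)` and `R : L¹(μ) → X*`
the operator determined by `⟨R(f), x⟩ = ∫ f·S(x) dμ`. If the corresponding operator
`S' : X → L²(μ)` has non-separable range, then `T := R ∘ S : X → X*` has non-separable
range. -/
theorem nonseparable_range_of_nonseparable_L2_range [CompleteSpace X]
    (μ : Measure (dualBall X)) [IsProbabilityMeasure μ] [μ.Regular]
    (R : Lp ℝ 1 μ →L[ℝ] StrongDual ℝ X)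
    (hR : ∀ (f : Lp ℝ 1 μ) (x : X),
      R f x = ∫ a : dualBall X, f a * ((a : WeakDual ℝ X) x) ∂μ)
    (hS' : ¬ IsSeparable
      (Set.range fun x : X => ContinuousMap.toLp 2 μ ℝ (canonicalEmbeddingCK X x))) :
    ¬ IsSeparable
      (Set.range fun x : X =>
        R (ContinuousMap.toLp 1 μ ℝ (canonicalEmbeddingCK X x))) := by
  intro hT
  apply hS'
  set Sf : X → Lp ℝ 2 μ := fun x => ContinuousMap.toLp 2 μ ℝ (canonicalEmbeddingCK X x) with hSf
  set Tf : X → StrongDual ℝ X := fun x => R (ContinuousMap.toLp 1 μ ℝ (canonicalEmbeddingCK X x))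
    with hTf
  -- linearity
  have hemb : ∀ x y : X, canonicalEmbeddingCK X (x - y)
      = canonicalEmbeddingCK X x - canonicalEmbeddingCK X y := by
    intro x y
    ext a
    simp [canonicalEmbeddingCK, map_sub]
  have hSsub : ∀ x y : X, Sf (x - y) = Sf x - Sf y := by
    intro x y; simp [hSf, hemb, map_sub]
  have hTsub : ∀ x y : X, Tf (x - y) = Tf x - Tf y := by
    intro x y; simp [hTf, hemb, map_sub]
  -- key identity
  have key : ∀ x : X, ‖Sf x‖ ^ 2 = Tf x x := by
    intro x
    rw [← real_inner_self_eq_norm_sq, MeasureTheory.L2.inner_def, hTf, hR]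
    refine integral_congr_ae ?_
    filter_upwards [ContinuousMap.coeFn_toLp (p := 2) μ (𝕜 := ℝ) (canonicalEmbeddingCK X x),
      ContinuousMap.coeFn_toLp (p := 1) μ (𝕜 := ℝ) (canonicalEmbeddingCK X x)] with a h2 h1
    rw [hSf]; simp only []
    rw [h2, h1]; rfl
  have key2 : ∀ x y : X, ‖Sf x - Sf y‖ ^ 2 ≤ ‖Tf x - Tf y‖ * ‖x - y‖ := by
    intro x y
    rw [← hSsub]
    calc ‖Sf (x - y)‖ ^ 2 = Tf (x - y) (x - y) := key _
      _ ≤ ‖Tf (x - y) (x - y)‖ := le_abs_self _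
      _ ≤ ‖Tf (x - y)‖ * ‖x - y‖ := (Tf (x - y)).le_opNorm _
      _ = ‖Tf x - Tf y‖ * ‖x - y‖ := by rw [hTsub]
  -- covering by balls
  have hcover : Set.range Sf ⊆ ⋃ k : ℕ, Sf '' Metric.closedBall 0 k := by
    rintro _ ⟨y, rfl⟩
    exact Set.mem_iUnion.2 ⟨⌈‖y‖⌉₊, ⟨y, by simpa using Nat.le_ceil ‖y‖, rfl⟩⟩
  refine IsSeparable.mono (IsSeparable.iUnion fun k => ?_) hcover
  -- separability on each ball
  have hTk : IsSeparable (Tf '' Metric.closedBall (0 : X) k) :=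
    hT.mono (Set.image_subset_range _ _)
  obtain ⟨t, hts, htc, htd⟩ := hTk.exists_countable_dense_subset
  choose f hfB hfT using fun d (hd : d ∈ t) => hts hd
  have : Countable t := htc.to_subtype
  set g : t → Lp ℝ 2 μ := fun d => Sf (f d.1 d.2) with hg
  refine ⟨Set.range g, Set.countable_range g, ?_⟩
  rintro _ ⟨x, hx, rfl⟩
  rw [Metric.mem_closure_iff]
  intro ε hε
  have hδ : (0:ℝ) < ε ^ 2 / (2 * k + 1) := by positivity
  obtain ⟨d, hd, hdist⟩ := Metric.mem_closure_iff.1 (htd ⟨x, hx, rfl⟩) _ hδ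
  refine ⟨g ⟨d, hd⟩, Set.mem_range_self _, ?_⟩
  have hy := hfB d hd
  have hxy : ‖x - f d hd‖ ≤ 2 * k := by
    have h1 : ‖x‖ ≤ k := by simpa using hx
    have h2 : ‖f d hd‖ ≤ k := by simpa using hy
    calc ‖x - f d hd‖ ≤ ‖x‖ + ‖f d hd‖ := norm_sub_le _ _
      _ ≤ 2 * k := by linarith
  have hTd : ‖Tf x - d‖ < ε ^ 2 / (2 * k + 1) := by
    simpa [dist_eq_norm] using hdist
  have hsq : ‖Sf x - g ⟨d, hd⟩‖ ^ 2 < ε ^ 2 := by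
    rw [hg]
    calc ‖Sf x - Sf (f d hd)‖ ^ 2 ≤ ‖Tf x - Tf (f d hd)‖ * ‖x - f d hd‖ := key2 _ _
      _ = ‖Tf x - d‖ * ‖x - f d hd‖ := by rw [hfT d hd]
      _ ≤ ‖Tf x - d‖ * (2 * k) := by
          exact mul_le_mul_of_nonneg_left hxy (norm_nonneg _)
      _ < ε ^ 2 / (2 * k + 1) * (2 * k + 1) := by
          have h2k : (0:ℝ) ≤ 2 * k := by positivity
          nlinarith [norm_nonneg (Tf x - d)]
      _ = ε ^ 2 := by field_simp
  rw [dist_eq_norm]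
  have := lt_of_pow_lt_pow_left₀ 2 (le_of_lt hε) hsq
  exact this
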